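/- Let H be a finitely generated abelian group and let X ∈ Λ³H satisfy ⟨w, X⟩^{(m)} = 0 for every integer m > 0 and every w ∈ Λ³(H^{(m)}). Let n ≥ 1 be an integer and p a prime number. If the image of X in (Λ³H) ⊗ ℤ/nℤ is zero, then the image of X in (Λ³H) ⊗ ℤ/npℤ is also zero. -/

import Mathlib

open scoped TensorProduct
open scoped DirectSum
open ExteriorAlgebra

set_option synthInstance.maxHeartbeats 1000000
set_option maxHeartbeats 1000000

/-- The decomposable element `x₁ ∧ x₂ ∧ x₃` of the third exterior power `Λ³M = ⋀[ℤ]^3 M`. -/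
noncomputable def wedge3 {M : Type*} [AddCommGroup M] (x₁ x₂ x₃ : M) : ⋀[ℤ]^3 M :=
  ⟨ExteriorAlgebra.ιMulti ℤ 3 ![x₁, x₂, x₃],
    ExteriorAlgebra.ιMulti_range ℤ 3 (Set.mem_range_self ![x₁, x₂, x₃])⟩

def IsPP (q : ℕ) : Prop := q = 0 ∨ ∃ ℓ k : ℕ, ℓ.Prime ∧ q = ℓ ^ k


lemma helperArith (a b c' : ℕ) (c : ℤ) (hab : a ∣ b) (hbc : b ∣ c') (ha : a ≠ 0)
    (H : ∀ m : ℕ, 0 < m → ∀ v₁ v₂ v₃ : ZMod m, a • v₁ = 0 → b • v₂ = 0 → c' • v₃ = 0 →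
      (c : ZMod m) * (v₁ * v₂ * v₃) = 0) : (a : ℤ) ∣ c := by
  by_cases hb : b = 0
  · subst hb
    have hc' : c' = 0 := zero_dvd_iff.mp hbc
    subst hc'
    have := H a (Nat.pos_of_ne_zero ha) 1 1 1 (by simp [nsmul_eq_mul, ZMod.natCast_self]) (by simp) (by simp)
    rw [mul_one, mul_one, mul_one] at this
    exact (ZMod.intCast_zmod_eq_zero_iff_dvd c a).mp this
  · have hbpos : 0 < b := Nat.pos_of_ne_zero hb
    have h1 : a • ((b / a : ℕ) : ZMod b) = 0 := by
      rw [nsmul_eq_mul, ← Nat.cast_mul, Nat.mul_div_cancel' hab, ZMod.natCast_self]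
    have h3 : c' • (1 : ZMod b) = 0 := by
      rw [nsmul_eq_mul, mul_one, ZMod.natCast_eq_zero_iff]
      exact hbc
    have h2 : b • (1 : ZMod b) = 0 := by simp [nsmul_eq_mul, ZMod.natCast_self]
    have := H b hbpos ((b / a : ℕ) : ZMod b) 1 1 h1 h2 h3
    rw [mul_one, mul_one] at this
    have hdvd : (b : ℤ) ∣ c * (b / a : ℕ) := by
      have : ((c * ((b / a : ℕ) : ℤ) : ℤ) : ZMod b) = 0 := by
        rw [Int.cast_mul, Int.cast_natCast]; exact this
      exact (ZMod.intCast_zmod_eq_zero_iff_dvd _ b).mp this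
    -- b = a * (b/a)
    have hba : (b : ℤ) = (a : ℤ) * ((b / a : ℕ) : ℤ) := by
      exact_mod_cast (Nat.mul_div_cancel' hab).symm
    obtain ⟨t, ht⟩ := hdvd
    have hk : ((b / a : ℕ) : ℤ) ≠ 0 := by
      have : b / a ≠ 0 := by
        intro h0
        rw [h0] at hba
        simp at hba
        exact hb hba
      exact_mod_cast this
    refine ⟨t, ?_⟩
    have : c * ((b / a : ℕ) : ℤ) = (a * t) * ((b / a : ℕ) : ℤ) := by
      rw [ht, hba]; ring
    exact mul_right_cancel₀ hk this

lemma arith (q₁ q₂ q₃ : ℕ) (c : ℤ) (hp₁ : IsPP q₁) (hp₂ : IsPP q₂) (hp₃ : IsPP q₃)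
    (H : ∀ m : ℕ, 0 < m → ∀ v₁ v₂ v₃ : ZMod m, q₁ • v₁ = 0 → q₂ • v₂ = 0 → q₃ • v₃ = 0 →
      (c : ZMod m) * (v₁ * v₂ * v₃) = 0) :
    ((Nat.gcd q₁ (Nat.gcd q₂ q₃) : ℕ) : ℤ) ∣ c := by
  by_cases hz : q₁ = 0 ∧ q₂ = 0 ∧ q₃ = 0
  · obtain ⟨z1, z2, z3⟩ := hz
    subst z1; subst z2; subst z3
    simp only [Nat.gcd_zero_left, Nat.cast_zero, zero_dvd_iff]
    by_contra hc
    have key : ∀ m : ℕ, 0 < m → (m : ℤ) ∣ c := by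
      intro m hm
      have := H m hm 1 1 1 (by simp) (by simp) (by simp)
      rw [mul_one, mul_one, mul_one] at this
      exact (ZMod.intCast_zmod_eq_zero_iff_dvd c m).mp this
    have h1 := key (c.natAbs + 1) (Nat.succ_pos _)
    have h2 : ((c.natAbs + 1 : ℕ) : ℤ) ≤ |c| := Int.le_of_dvd (abs_pos.mpr hc) ((dvd_abs _ _).mpr h1)
    rw [Int.abs_eq_natAbs] at h2
    omega
  · set d := Nat.gcd q₁ (Nat.gcd q₂ q₃) with hd
    have hd1 : d ∣ q₁ := Nat.gcd_dvd_left _ _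
    have hd2 : d ∣ q₂ := (Nat.gcd_dvd_right q₁ _).trans (Nat.gcd_dvd_left _ _)
    have hd3 : d ∣ q₃ := (Nat.gcd_dvd_right q₁ _).trans (Nat.gcd_dvd_right _ _)
    -- comparability
    have comp : ∀ x y : ℕ, IsPP x → IsPP y → d ∣ x → d ∣ y → 2 ≤ d → (x ∣ y ∨ y ∣ x) := by
      intro x y hx hy hdx hdy hd2'
      obtain ⟨ℓ, hℓ, hℓd⟩ := Nat.exists_prime_and_dvd (by omega : d ≠ 1)
      rcases hx with rfl | ⟨ℓ₁, k₁, hℓ₁, rfl⟩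
      · right; exact dvd_zero _
      rcases hy with rfl | ⟨ℓ₂, k₂, hℓ₂, rfl⟩
      · left; exact dvd_zero _
      have e1 : ℓ = ℓ₁ := by
        have : ℓ ∣ ℓ₁ ^ k₁ := hℓd.trans hdx
        have := hℓ.dvd_of_dvd_pow this
        exact (Nat.prime_dvd_prime_iff_eq hℓ hℓ₁).mp this
      have e2 : ℓ = ℓ₂ := by
        have : ℓ ∣ ℓ₂ ^ k₂ := hℓd.trans hdy
        have := hℓ.dvd_of_dvd_pow this
        exact (Nat.prime_dvd_prime_iff_eq hℓ hℓ₂).mp this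
      subst e1
      rcases e2 with rfl
      rcases le_total k₁ k₂ with h | h
      · left; exact pow_dvd_pow _ h
      · right; exact pow_dvd_pow _ h
    by_cases hdle : d ≤ 1
    · interval_cases d
      · exfalso
        have := Nat.gcd_eq_zero_iff.mp hd.symm
        have := Nat.gcd_eq_zero_iff.mp this.2
        exact hz ⟨(Nat.gcd_eq_zero_iff.mp hd.symm).1, this.1, this.2⟩
      · simp
    · have hd2' : 2 ≤ d := by omega
      have c12 := comp q₁ q₂ hp₁ hp₂ hd1 hd2 hd2'
      have c13 := comp q₁ q₃ hp₁ hp₃ hd1 hd3 hd2'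
      have c23 := comp q₂ q₃ hp₂ hp₃ hd2 hd3 hd2'
      have hnz : ∀ x : ℕ, d ∣ x → x ≠ 0 → True := fun _ _ _ => trivial
      -- helper to finish given a chain
      have fin1 : (q₁ : ℤ) ∣ c → ((d : ℕ) : ℤ) ∣ c := fun h => (Int.natCast_dvd_natCast.mpr hd1).trans h
      have fin2 : (q₂ : ℤ) ∣ c → ((d : ℕ) : ℤ) ∣ c := fun h => (Int.natCast_dvd_natCast.mpr hd2).trans h
      have fin3 : (q₃ : ℤ) ∣ c → ((d : ℕ) : ℤ) ∣ c := fun h => (Int.natCast_dvd_natCast.mpr hd3).trans h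
      have nz1 : q₁ ≠ 0 → q₂ ≠ 0 → q₃ ≠ 0 → True := fun _ _ _ => trivial
      -- not all zero with chains: head nonzero or propagate
      rcases c12 with h12 | h21
      · rcases c23 with h23 | h32
        · -- q₁ ∣ q₂ ∣ q₃
          by_cases h1 : q₁ = 0
          · exact absurd ⟨h1, zero_dvd_iff.mp (h1 ▸ h12), zero_dvd_iff.mp (h1 ▸ (h12.trans h23))⟩ hz
          · exact fin1 (helperArith q₁ q₂ q₃ c h12 h23 h1 H)
        · rcases c13 with h13 | h31
          · -- q₁ ∣ q₃ ∣ q₂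
            by_cases h1 : q₁ = 0
            · exact absurd ⟨h1, zero_dvd_iff.mp (h1 ▸ h12), zero_dvd_iff.mp (h1 ▸ h13)⟩ hz
            · refine fin1 (helperArith q₁ q₃ q₂ c h13 h32 h1 ?_)
              intro m hm v₁ v₂ v₃ a1 a2 a3
              have := H m hm v₁ v₃ v₂ a1 a3 a2
              linear_combination this
          · -- q₃ ∣ q₁ ∣ q₂
            by_cases h3 : q₃ = 0
            · exact absurd ⟨zero_dvd_iff.mp (h3 ▸ h31), zero_dvd_iff.mp (h3 ▸ (h31.trans h12)), h3⟩ hz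
            · refine fin3 (helperArith q₃ q₁ q₂ c h31 h12 h3 ?_)
              intro m hm v₁ v₂ v₃ a1 a2 a3
              have := H m hm v₂ v₃ v₁ a2 a3 a1
              linear_combination this
      · rcases c13 with h13 | h31
        · -- q₂ ∣ q₁ ∣ q₃
          by_cases h2 : q₂ = 0
          · exact absurd ⟨zero_dvd_iff.mp (h2 ▸ h21), h2, zero_dvd_iff.mp (h2 ▸ (h21.trans h13))⟩ hz
          · refine fin2 (helperArith q₂ q₁ q₃ c h21 h13 h2 ?_)
            intro m hm v₁ v₂ v₃ a1 a2 a3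
            have := H m hm v₂ v₁ v₃ a2 a1 a3
            linear_combination this
        · rcases c23 with h23 | h32
          · -- q₂ ∣ q₃ ∣ q₁
            by_cases h2 : q₂ = 0
            · exact absurd ⟨zero_dvd_iff.mp (h2 ▸ h21), h2, zero_dvd_iff.mp (h2 ▸ h23)⟩ hz
            · refine fin2 (helperArith q₂ q₃ q₁ c h23 h31 h2 ?_)
              intro m hm v₁ v₂ v₃ a1 a2 a3
              have := H m hm v₃ v₁ v₂ a3 a1 a2
              linear_combination this
          · -- q₃ ∣ q₂ ∣ q₁
            by_cases h3 : q₃ = 0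
            · exact absurd ⟨zero_dvd_iff.mp (h3 ▸ (h32.trans h21)), zero_dvd_iff.mp (h3 ▸ h32), h3⟩ hz
            · refine fin3 (helperArith q₃ q₂ q₁ c h32 h21 h3 ?_)
              intro m hm v₁ v₂ v₃ a1 a2 a3
              have := H m hm v₃ v₂ v₁ a3 a2 a1
              linear_combination this

lemma structure_lemma (H : Type*) [AddCommGroup H] (hFG : AddGroup.FG H) :
    ∃ (N : ℕ) (e : Fin N → H) (q : Fin N → ℕ),
      (∀ i, q i • e i = 0) ∧
      Submodule.span ℤ (Set.range e) = ⊤ ∧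
      (∀ (m : ℕ), 0 < m → ∀ (i : Fin N) (v : ZMod m), q i • v = 0 →
        ∃ τ : H →+ ZMod m, τ (e i) = v ∧ ∀ j, j ≠ i → τ (e j) = 0) ∧
      (∀ i, IsPP (q i)) := by
  classical
  haveI := hFG
  obtain ⟨r, ι, hι, pp, hpp, ee, ⟨φ⟩⟩ := AddCommGroup.equiv_free_prod_directSum_zmod H
  haveI := hι
  haveI : ∀ i : ι, NeZero (pp i ^ ee i) := fun i => ⟨pow_ne_zero _ (hpp i).pos.ne'⟩
  set k := Fintype.card ι with hk
  set ix : Fin k ≃ ι := (Fintype.equivFin ι).symm with hix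
  set idxE : Fin (r + k) ≃ (Fin r ⊕ ι) := finSumFinEquiv.symm.trans (Equiv.sumCongr (Equiv.refl _) ix) with hidxE
  set gen : (Fin r ⊕ ι) → H := Sum.elim (fun j => φ.symm (Finsupp.single j 1, 0))
    (fun i => φ.symm (0, DirectSum.of (fun i => ZMod (pp i ^ ee i)) i 1)) with hgen
  set ord : (Fin r ⊕ ι) → ℕ := Sum.elim (fun _ => 0) (fun i => pp i ^ ee i) with hord
  refine ⟨r + k, fun i => gen (idxE i), fun i => ord (idxE i), ?_, ?_, ?_, ?_⟩
  · intro i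
    show ord (idxE i) • gen (idxE i) = 0
    rcases h : idxE i with j | j
    · rw [hord, hgen]; simp
    · rw [hord, hgen]; simp only [Sum.elim_inr]
      rw [← map_nsmul]
      have : (pp j ^ ee j) • ((0, DirectSum.of (fun i => ZMod (pp i ^ ee i)) j 1) :
          (Fin r →₀ ℤ) × (⨁ i : ι, ZMod (pp i ^ ee i))) =
          (0, DirectSum.of (fun i => ZMod (pp i ^ ee i)) j ((pp j ^ ee j) • 1)) := by
        rw [Prod.smul_mk, smul_zero, ← map_nsmul]
      rw [this]
      have : (pp j ^ ee j) • (1 : ZMod (pp j ^ ee j)) = 0 := by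
        simp [nsmul_eq_mul, ZMod.natCast_self]
      rw [this, map_zero, Prod.mk_zero_zero, map_zero]
  · rw [eq_top_iff]
    rintro h -
    have hrange : Set.range (fun i => gen (idxE i)) = Set.range gen :=
      Function.Surjective.range_comp idxE.surjective gen
    rw [hrange]
    have key1 : ∀ f : Fin r →₀ ℤ, φ.symm (f, 0) ∈ Submodule.span ℤ (Set.range gen) := by
      intro f
      induction f using Finsupp.induction with
      | zero => rw [Prod.mk_zero_zero, map_zero]; exact Submodule.zero_mem _
      | single_add a b f _ _ ih =>
        have : ((Finsupp.single a b + f : Fin r →₀ ℤ), (0 : ⨁ i : ι, ZMod (pp i ^ ee i))) =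
            (Finsupp.single a b, 0) + (f, 0) := by simp [Prod.ext_iff]
        rw [this, map_add]
        refine Submodule.add_mem _ ?_ ih
        have hsingle : ((Finsupp.single a b : Fin r →₀ ℤ), (0 : ⨁ i : ι, ZMod (pp i ^ ee i))) =
            b • ((Finsupp.single a 1, 0) : (Fin r →₀ ℤ) × (⨁ i : ι, ZMod (pp i ^ ee i))) := by
          rw [Prod.smul_mk, smul_zero, Finsupp.smul_single, smul_eq_mul, mul_one]
        rw [hsingle, map_zsmul]
        exact Submodule.smul_mem _ _ (Submodule.subset_span ⟨Sum.inl a, rfl⟩)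
    have key2 : ∀ d : ⨁ i : ι, ZMod (pp i ^ ee i),
        φ.symm (0, d) ∈ Submodule.span ℤ (Set.range gen) := by
      intro d
      induction d using DirectSum.induction_on with
      | zero => rw [Prod.mk_zero_zero, map_zero]; exact Submodule.zero_mem _
      | of i x =>
        have hx : DirectSum.of (fun i => ZMod (pp i ^ ee i)) i x =
            x.val • DirectSum.of (fun i => ZMod (pp i ^ ee i)) i 1 := by
          rw [← map_nsmul]
          congr 1
          rw [nsmul_eq_mul, mul_one, ZMod.natCast_val, ZMod.cast_id]
        have : ((0 : Fin r →₀ ℤ), DirectSum.of (fun i => ZMod (pp i ^ ee i)) i x) =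
            (x.val : ℤ) • ((0, DirectSum.of (fun i => ZMod (pp i ^ ee i)) i 1) :
              (Fin r →₀ ℤ) × (⨁ i : ι, ZMod (pp i ^ ee i))) := by
          rw [Prod.smul_mk, smul_zero, hx, natCast_zsmul]
        rw [this, map_zsmul]
        exact Submodule.smul_mem _ _ (Submodule.subset_span ⟨Sum.inr i, rfl⟩)
      | add x y hx hy =>
        have : ((0 : Fin r →₀ ℤ), x + y) = ((0 : Fin r →₀ ℤ), x) + ((0 : Fin r →₀ ℤ), y) := by
          simp [Prod.ext_iff]
        rw [this, map_add]
        exact Submodule.add_mem _ hx hy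
    have : h = φ.symm (( (φ h).1, 0)) + φ.symm ((0, (φ h).2)) := by
      rw [← map_add]
      have : (((φ h).1, (0 : ⨁ i : ι, ZMod (pp i ^ ee i))) + ((0 : Fin r →₀ ℤ), (φ h).2)) = φ h := by
        simp [Prod.ext_iff]
      rw [this, AddEquiv.symm_apply_apply]
    rw [this]
    exact Submodule.add_mem _ (key1 _) (key2 _)
  · intro m hm i v hqv
    beta_reduce
    beta_reduce at hqv
    rcases h : idxE i with j | j
    · -- free generator
      refine ⟨(AddMonoidHom.mk' (fun h => ((φ h).1 j : ℤ) • v) ?_), ?_, ?_⟩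
      · intro a b
        simp only [map_add, Prod.fst_add, Finsupp.add_apply]
        rw [add_smul]
      · simp only [AddMonoidHom.mk'_apply, h, hgen, Sum.elim_inl]
        rw [AddEquiv.apply_symm_apply]
        simp [Finsupp.single_apply]
      · intro j' hj'
        rcases h' : idxE j' with a | a
        · have : a ≠ j := by
            intro rfl'
            exact hj' (idxE.injective (h'.trans (rfl' ▸ h.symm)))
          simp only [AddMonoidHom.mk'_apply, hgen, Sum.elim_inl]
          rw [AddEquiv.apply_symm_apply]
          simp [Finsupp.single_apply, this]
        · simp only [AddMonoidHom.mk'_apply, hgen, Sum.elim_inr]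
          rw [AddEquiv.apply_symm_apply]
          simp
    · -- torsion generator
      have hq : ord (idxE i) = pp j ^ ee j := by rw [h, hord]; rfl
      rw [hq] at hqv
      set ψ : ZMod (pp j ^ ee j) →+ ZMod m :=
        ZMod.lift (pp j ^ ee j) ⟨(zmultiplesHom (ZMod m)) v, by
          simp only [zmultiplesHom_apply]
          rw [natCast_zsmul]
          exact hqv⟩ with hψ
      have hψ1 : ψ (1 : ZMod (pp j ^ ee j)) = v := by
        have : ((1 : ℤ) : ZMod (pp j ^ ee j)) = 1 := by push_cast; rfl
        rw [← this, hψ, ZMod.lift_coe]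
        simp
      refine ⟨AddMonoidHom.mk' (fun x => ψ (((φ x).2) j)) ?_, ?_, ?_⟩
      · intro a b
        show ψ ((φ (a + b)).2 j) = ψ ((φ a).2 j) + ψ ((φ b).2 j)
        rw [map_add, Prod.snd_add, DFinsupp.add_apply, map_add]
      · simp only [AddMonoidHom.mk'_apply, hgen, h, Sum.elim_inr]
        rw [AddEquiv.apply_symm_apply]
        show ψ ((DirectSum.of (fun i => ZMod (pp i ^ ee i)) j 1) j) = v
        rw [DirectSum.of_eq_same]
        exact hψ1
      · intro j' hj'
        rcases h' : idxE j' with a | a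
        · simp only [AddMonoidHom.mk'_apply, hgen, Sum.elim_inl]
          rw [AddEquiv.apply_symm_apply]
          show ψ ((0 : ⨁ i : ι, ZMod (pp i ^ ee i)) j) = 0
          rw [DFinsupp.zero_apply, map_zero]
        · have hne : a ≠ j := by
            intro rfl'
            exact hj' (idxE.injective (h'.trans (rfl' ▸ h.symm)))
          simp only [AddMonoidHom.mk'_apply, hgen, Sum.elim_inr]
          rw [AddEquiv.apply_symm_apply]
          show ψ ((DirectSum.of (fun i => ZMod (pp i ^ ee i)) a 1) j) = 0
          rw [DirectSum.of_eq_of_ne _ _ _ hne.symm]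
          exact map_zero ψ
  · intro i
    rcases h : idxE i with j | j
    · left; simp [hord, h]
    · right; exact ⟨pp j, ee j, hpp j, by simp [hord, h]⟩

lemma ιMulti3_eq {M : Type*} [AddCommGroup M] (v : Fin 3 → M) :
    ιMulti ℤ 3 v = ι ℤ (v 0) * (ι ℤ (v 1) * ι ℤ (v 2)) := by
  rw [ιMulti_apply]
  simp [List.ofFn_succ]

lemma wedge3_val' {M : Type*} [AddCommGroup M] (x y z : M) :
    (wedge3 x y z : ExteriorAlgebra ℤ M) = ι ℤ x * (ι ℤ y * ι ℤ z) := by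
  show ιMulti ℤ 3 ![x, y, z] = _
  rw [ιMulti3_eq]
  simp

lemma swap3 {M : Type*} [AddCommGroup M] (x y : M) :
    ι ℤ (M := M) y * ι ℤ x = -(ι ℤ x * ι ℤ y) :=
  eq_neg_of_add_eq_zero_left (ι_add_mul_swap y x)

lemma sorted_mem {M : Type*} [AddCommGroup M] {N : ℕ} (e : Fin N → M)
    (i j k : Fin N) :
    ι ℤ (e i) * (ι ℤ (e j) * ι ℤ (e k)) ∈ Submodule.span ℤ (Set.range
      (fun t : {t : Fin N × Fin N × Fin N // t.1 < t.2.1 ∧ t.2.1 < t.2.2} =>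
        ι ℤ (e t.1.1) * (ι ℤ (e t.1.2.1) * ι ℤ (e t.1.2.2)))) := by
  set P := Submodule.span ℤ (Set.range
      (fun t : {t : Fin N × Fin N × Fin N // t.1 < t.2.1 ∧ t.2.1 < t.2.2} =>
        ι ℤ (e t.1.1) * (ι ℤ (e t.1.2.1) * ι ℤ (e t.1.2.2)))) with hP
  have gmem : ∀ a b c : Fin N, a < b → b < c → ι ℤ (e a) * (ι ℤ (e b) * ι ℤ (e c)) ∈ P :=
    fun a b c hab hbc => Submodule.subset_span ⟨⟨(a, b, c), hab, hbc⟩, rfl⟩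
  rcases lt_trichotomy i j with hij | rfl | hji
  · rcases lt_trichotomy j k with hjk | rfl | hkj
    · exact gmem _ _ _ hij hjk
    · rw [ι_sq_zero, mul_zero]; exact zero_mem _
    · rcases lt_trichotomy i k with hik | rfl | hki
      · rw [swap3 (e k) (e j), mul_neg]
        exact neg_mem (gmem _ _ _ hik hkj)
      · rw [swap3 (e i) (e j), mul_neg, ← mul_assoc, ι_sq_zero, zero_mul, neg_zero]
        exact zero_mem _
      · rw [swap3 (e k) (e j), mul_neg, ← mul_assoc, swap3 (e k) (e i), neg_mul, neg_neg,
          mul_assoc]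
        exact gmem _ _ _ hki hij
  · rw [← mul_assoc, ι_sq_zero, zero_mul]; exact zero_mem _
  · rcases lt_trichotomy i k with hik | rfl | hki
    · rw [← mul_assoc, swap3 (e j) (e i), neg_mul, mul_assoc]
      exact neg_mem (gmem _ _ _ hji hik)
    · rw [swap3 (e i) (e j), mul_neg, ← mul_assoc, ι_sq_zero, zero_mul, neg_zero]
      exact zero_mem _
    · rcases lt_trichotomy j k with hjk | rfl | hkj
      · rw [← mul_assoc, swap3 (e j) (e i), neg_mul, mul_assoc, swap3 (e k) (e i), mul_neg,
          neg_neg]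
        exact gmem _ _ _ hjk hki
      · rw [ι_sq_zero, mul_zero]; exact zero_mem _
      · rw [swap3 (e k) (e j), mul_neg, ← mul_assoc, swap3 (e k) (e i), neg_mul, neg_neg,
          mul_assoc, swap3 (e j) (e i), mul_neg]
        exact neg_mem (gmem _ _ _ hkj hji)

lemma mem_span_sorted {M : Type*} [AddCommGroup M] {N : ℕ} (e : Fin N → M)
    (hspan : Submodule.span ℤ (Set.range e) = ⊤) (X : ⋀[ℤ]^3 M) :
    (X : ExteriorAlgebra ℤ M) ∈ Submodule.span ℤ (Set.range
      (fun t : {t : Fin N × Fin N × Fin N // t.1 < t.2.1 ∧ t.2.1 < t.2.2} =>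
        ι ℤ (e t.1.1) * (ι ℤ (e t.1.2.1) * ι ℤ (e t.1.2.2)))) := by
  set P := Submodule.span ℤ (Set.range
      (fun t : {t : Fin N × Fin N × Fin N // t.1 < t.2.1 ∧ t.2.1 < t.2.2} =>
        ι ℤ (e t.1.1) * (ι ℤ (e t.1.2.1) * ι ℤ (e t.1.2.2)))) with hP
  have hX : (X : ExteriorAlgebra ℤ M) ∈ Submodule.span ℤ (Set.range (ιMulti ℤ 3)) := by
    rw [ιMulti_span_fixedDegree]; exact X.2
  have h1 : ∀ (a b : Fin N) (z : M), ι ℤ (e a) * (ι ℤ (e b) * ι ℤ z) ∈ P := by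
    intro a b z
    have hz : z ∈ Submodule.span ℤ (Set.range e) := by rw [hspan]; trivial
    induction hz using Submodule.span_induction with
    | mem x hx => obtain ⟨c, rfl⟩ := hx; exact sorted_mem e a b c
    | zero => rw [map_zero, mul_zero, mul_zero]; exact zero_mem _
    | add x y _ _ hx hy => rw [map_add, mul_add, mul_add]; exact add_mem hx hy
    | smul r x _ hx =>
      rw [map_smul, mul_smul_comm, mul_smul_comm]
      exact Submodule.smul_mem _ _ hx
  have h2 : ∀ (a : Fin N) (y z : M), ι ℤ (e a) * (ι ℤ y * ι ℤ z) ∈ P := by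
    intro a y z
    have hy : y ∈ Submodule.span ℤ (Set.range e) := by rw [hspan]; trivial
    induction hy using Submodule.span_induction with
    | mem x hx => obtain ⟨c, rfl⟩ := hx; exact h1 a c z
    | zero => rw [map_zero, zero_mul, mul_zero]; exact zero_mem _
    | add x y _ _ hx hy => rw [map_add, add_mul, mul_add]; exact add_mem hx hy
    | smul r x _ hx =>
      rw [map_smul, smul_mul_assoc, mul_smul_comm]
      exact Submodule.smul_mem _ _ hx
  have h3 : ∀ x y z : M, ι ℤ x * (ι ℤ y * ι ℤ z) ∈ P := by
    intro x y z
    have hx : x ∈ Submodule.span ℤ (Set.range e) := by rw [hspan]; trivial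
    induction hx using Submodule.span_induction with
    | mem x hx => obtain ⟨c, rfl⟩ := hx; exact h2 c y z
    | zero => rw [map_zero, zero_mul]; exact zero_mem _
    | add x y _ _ hx hy => rw [map_add, add_mul]; exact add_mem hx hy
    | smul r x _ hx =>
      rw [map_smul, smul_mul_assoc]
      exact Submodule.smul_mem _ _ hx
  refine Submodule.span_le.mpr ?_ hX
  rintro _ ⟨v, rfl⟩
  rw [ιMulti3_eq]
  exact h3 _ _ _

lemma pick_out {N : ℕ} {i₁ i₂ i₃ j₁ j₂ j₃ : Fin N} (h12 : i₁ < i₂) (h23 : i₂ < i₃)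
    (g12 : j₁ < j₂) (g23 : j₂ < j₃) (hne : ¬(j₁ = i₁ ∧ j₂ = i₂ ∧ j₃ = i₃)) :
    (j₁ ≠ i₁ ∧ j₁ ≠ i₂ ∧ j₁ ≠ i₃) ∨ (j₂ ≠ i₁ ∧ j₂ ≠ i₂ ∧ j₂ ≠ i₃) ∨
      (j₃ ≠ i₁ ∧ j₃ ≠ i₂ ∧ j₃ ≠ i₃) := by
  simp only [Fin.lt_def, Fin.ext_iff, not_and] at *
  omega


/-- Let `H` be a finitely generated abelian group and let `X ∈ Λ³H` satisfy
`⟨w, X⟩⁽ᵐ⁾ = 0` for every integer `m > 0` and every `w ∈ Λ³(H⁽ᵐ⁾)`. Let `n ≥ 1` be an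
integer and `p` a prime number. If the image of `X` in `(Λ³H) ⊗ ℤ/nℤ` is zero, then the
image of `X` in `(Λ³H) ⊗ ℤ/npℤ` is also zero. -/
theorem stmt1 (H : Type*) [AddCommGroup H] (hFG : AddGroup.FG H)
    (pairing : ∀ m : ℕ, 0 < m → (⋀[ℤ]^3 (H →+ ZMod m)) →ₗ[ℤ] (⋀[ℤ]^3 H) →ₗ[ℤ] ZMod m)
    (hpair : ∀ (m : ℕ) (hm : 0 < m) (y₁ y₂ y₃ : H →+ ZMod m) (x₁ x₂ x₃ : H),
      pairing m hm (wedge3 y₁ y₂ y₃) (wedge3 x₁ x₂ x₃) =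
        ∑ σ : Equiv.Perm (Fin 3), ((Equiv.Perm.sign σ : ℤ) : ZMod m) *
          ∏ i : Fin 3, ![y₁, y₂, y₃] (σ i) (![x₁, x₂, x₃] i))
    (X : ⋀[ℤ]^3 H)
    (hX : ∀ (m : ℕ) (hm : 0 < m) (w : ⋀[ℤ]^3 (H →+ ZMod m)), pairing m hm w X = 0)
    (n : ℕ) (hn : 1 ≤ n) (p : ℕ) (hp : p.Prime)
    (h : (X ⊗ₜ[ℤ] (1 : ZMod n) : (⋀[ℤ]^3 H) ⊗[ℤ] ZMod n) = 0) :
    (X ⊗ₜ[ℤ] (1 : ZMod (n * p)) : (⋀[ℤ]^3 H) ⊗[ℤ] ZMod (n * p)) = 0 := by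
  obtain ⟨N, e, q, hqe, hspan, hdual, hpp⟩ := structure_lemma H hFG
  suffices hX0 : X = 0 by rw [hX0, TensorProduct.zero_tmul]
  have hmem := mem_span_sorted e hspan X
  rw [Submodule.mem_span_range_iff_exists_fun ℤ] at hmem
  obtain ⟨co, hco⟩ := hmem
  set g : {t : Fin N × Fin N × Fin N // t.1 < t.2.1 ∧ t.2.1 < t.2.2} → ⋀[ℤ]^3 H :=
    fun t => wedge3 (e t.1.1) (e t.1.2.1) (e t.1.2.2) with hg
  have hXsum : X = ∑ t, co t • g t := by
    apply Subtype.ext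
    have hcoe : ((∑ t, co t • g t : ⋀[ℤ]^3 H) : ExteriorAlgebra ℤ H) =
        ∑ t, ((co t • g t : ⋀[ℤ]^3 H) : ExteriorAlgebra ℤ H) :=
      map_sum ((⋀[ℤ]^3 H).subtype) _ Finset.univ
    rw [hcoe, ← hco]
    apply Finset.sum_congr rfl
    intro t _
    simp only [hg, SetLike.val_smul, wedge3_val']
  have hterm : ∀ t, co t • g t = 0 := by
    rintro ⟨⟨i₁, i₂, i₃⟩, h12, h23⟩
    set t : {t : Fin N × Fin N × Fin N // t.1 < t.2.1 ∧ t.2.1 < t.2.2} :=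
      ⟨(i₁, i₂, i₃), h12, h23⟩ with ht
    have key : ∀ m : ℕ, 0 < m → ∀ v₁ v₂ v₃ : ZMod m,
        q i₁ • v₁ = 0 → q i₂ • v₂ = 0 → q i₃ • v₃ = 0 →
        ((co t : ℤ) : ZMod m) * (v₁ * v₂ * v₃) = 0 := by
      intro m hm v₁ v₂ v₃ hv₁ hv₂ hv₃
      obtain ⟨τ₁, hτ₁, hτ₁'⟩ := hdual m hm i₁ v₁ hv₁
      obtain ⟨τ₂, hτ₂, hτ₂'⟩ := hdual m hm i₂ v₂ hv₂
      obtain ⟨τ₃, hτ₃, hτ₃'⟩ := hdual m hm i₃ v₃ hv₃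
      have hvan : ∀ (s : Fin 3) (x : Fin N), x ≠ i₁ → x ≠ i₂ → x ≠ i₃ →
          ![τ₁, τ₂, τ₃] s (e x) = 0 := by
        intro s x hx1 hx2 hx3
        fin_cases s
        · exact hτ₁' x hx1
        · exact hτ₂' x hx2
        · exact hτ₃' x hx3
      have hvan2 : ∀ s l : Fin 3, s ≠ l →
          ![τ₁, τ₂, τ₃] s (![e i₁, e i₂, e i₃] l) = 0 := by
        intro s l hsl
        fin_cases s <;> fin_cases l <;>
          simp only [Matrix.cons_val_zero, Matrix.cons_val_one, Matrix.head_cons,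
            Matrix.cons_val_two, Matrix.tail_cons] <;>
          first
            | exact absurd rfl hsl
            | exact hτ₁' _ (ne_of_gt h12)
            | exact hτ₁' _ (ne_of_gt (h12.trans h23))
            | exact hτ₂' _ (ne_of_lt h12)
            | exact hτ₂' _ (ne_of_gt h23)
            | exact hτ₃' _ (ne_of_lt (h12.trans h23))
            | exact hτ₃' _ (ne_of_lt h23)
      have h0 := hX m hm (wedge3 τ₁ τ₂ τ₃)
      rw [hXsum, map_sum] at h0
      simp only [map_smul] at h0
      rw [Finset.sum_eq_single t] at h0
      · have hmain : pairing m hm (wedge3 τ₁ τ₂ τ₃) (g t) = v₁ * v₂ * v₃ := by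
          show pairing m hm (wedge3 τ₁ τ₂ τ₃) (wedge3 (e i₁) (e i₂) (e i₃)) = _
          rw [hpair]
          rw [Finset.sum_eq_single 1]
          · simp only [Equiv.Perm.sign_one, Units.val_one, Int.cast_one, one_mul,
              Equiv.Perm.coe_one, id_eq]
            rw [Fin.prod_univ_three]
            simp only [Matrix.cons_val_zero, Matrix.cons_val_one, Matrix.head_cons,
              Matrix.cons_val_two, Matrix.tail_cons]
            rw [hτ₁, hτ₂, hτ₃]
          · intro σ _ hσ
            have hex : ∃ l : Fin 3, σ l ≠ l := by
              by_contra hc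
              push_neg at hc
              exact hσ (Equiv.ext hc)
            obtain ⟨l, hl⟩ := hex
            rw [Finset.prod_eq_zero (Finset.mem_univ l) (hvan2 (σ l) l hl), mul_zero]
          · intro hone; exact absurd (Finset.mem_univ _) hone
        rw [hmain, zsmul_eq_mul] at h0
        exact h0
      · rintro ⟨⟨j₁, j₂, j₃⟩, g12, g23⟩ - htt'
        have hne : ¬(j₁ = i₁ ∧ j₂ = i₂ ∧ j₃ = i₃) := by
          rintro ⟨e1, e2, e3⟩
          exact htt' (by apply Subtype.ext; simp [ht, e1, e2, e3])
        have hzero : pairing m hm (wedge3 τ₁ τ₂ τ₃)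
            (wedge3 (e j₁) (e j₂) (e j₃)) = 0 := by
          rw [hpair]
          apply Finset.sum_eq_zero
          intro σ _
          rcases pick_out h12 h23 g12 g23 hne with ⟨a1, a2, a3⟩ | ⟨a1, a2, a3⟩ | ⟨a1, a2, a3⟩
          · rw [Finset.prod_eq_zero (Finset.mem_univ (0 : Fin 3)), mul_zero]
            show ![τ₁, τ₂, τ₃] (σ 0) (![e j₁, e j₂, e j₃] 0) = 0
            simp only [Matrix.cons_val_zero]
            exact hvan (σ 0) j₁ a1 a2 a3
          · rw [Finset.prod_eq_zero (Finset.mem_univ (1 : Fin 3)), mul_zero]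
            show ![τ₁, τ₂, τ₃] (σ 1) (![e j₁, e j₂, e j₃] 1) = 0
            simp only [Matrix.cons_val_one, Matrix.head_cons]
            exact hvan (σ 1) j₂ a1 a2 a3
          · rw [Finset.prod_eq_zero (Finset.mem_univ (2 : Fin 3)), mul_zero]
            show ![τ₁, τ₂, τ₃] (σ 2) (![e j₁, e j₂, e j₃] 2) = 0
            simp only [Matrix.cons_val_two, Matrix.tail_cons, Matrix.head_cons]
            exact hvan (σ 2) j₃ a1 a2 a3
        show co _ • pairing m hm (wedge3 τ₁ τ₂ τ₃) (wedge3 (e j₁) (e j₂) (e j₃)) = 0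
        rw [hzero, smul_zero]
      · intro hone; exact absurd (Finset.mem_univ _) hone
    have hdvd := arith (q i₁) (q i₂) (q i₃) (co t) (hpp i₁) (hpp i₂) (hpp i₃) key
    have hq1 : (q i₁ : ℤ) • g t = 0 := by
      apply Subtype.ext
      show (q i₁ : ℤ) • ((wedge3 (e i₁) (e i₂) (e i₃) : ⋀[ℤ]^3 H) : ExteriorAlgebra ℤ H) = 0
      rw [wedge3_val', ← smul_mul_assoc, ← map_smul, natCast_zsmul, hqe, map_zero, zero_mul]
    have hq2 : (q i₂ : ℤ) • g t = 0 := by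
      apply Subtype.ext
      show (q i₂ : ℤ) • ((wedge3 (e i₁) (e i₂) (e i₃) : ⋀[ℤ]^3 H) : ExteriorAlgebra ℤ H) = 0
      have hrw : ι ℤ (e i₁) * (((q i₂ : ℤ) • ι ℤ (e i₂)) * ι ℤ (e i₃)) =
          (q i₂ : ℤ) • (ι ℤ (e i₁) * (ι ℤ (e i₂) * ι ℤ (e i₃))) := by
        rw [smul_mul_assoc, mul_smul_comm]
      rw [wedge3_val', ← hrw, ← map_smul, natCast_zsmul, hqe, map_zero, zero_mul, mul_zero]
    have hq3 : (q i₃ : ℤ) • g t = 0 := by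
      apply Subtype.ext
      show (q i₃ : ℤ) • ((wedge3 (e i₁) (e i₂) (e i₃) : ⋀[ℤ]^3 H) : ExteriorAlgebra ℤ H) = 0
      have hrw : ι ℤ (e i₁) * (ι ℤ (e i₂) * ((q i₃ : ℤ) • ι ℤ (e i₃))) =
          (q i₃ : ℤ) • (ι ℤ (e i₁) * (ι ℤ (e i₂) * ι ℤ (e i₃))) := by
        rw [mul_smul_comm, mul_smul_comm]
      rw [wedge3_val', ← hrw, ← map_smul, natCast_zsmul, hqe, map_zero, mul_zero, mul_zero]
    obtain ⟨k, hk⟩ := hdvd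
    have hbez1 : ((Nat.gcd (q i₂) (q i₃) : ℕ) : ℤ) =
        (q i₂) * Nat.gcdA (q i₂) (q i₃) + (q i₃) * Nat.gcdB (q i₂) (q i₃) :=
      Nat.gcd_eq_gcd_ab _ _
    have hbez2 : ((Nat.gcd (q i₁) (Nat.gcd (q i₂) (q i₃)) : ℕ) : ℤ) =
        (q i₁) * Nat.gcdA (q i₁) (Nat.gcd (q i₂) (q i₃)) +
        ((Nat.gcd (q i₂) (q i₃) : ℕ) : ℤ) * Nat.gcdB (q i₁) (Nat.gcd (q i₂) (q i₃)) :=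
      Nat.gcd_eq_gcd_ab _ _
    obtain ⟨c₁, hc₁⟩ : ∃ c : ℤ, c = Nat.gcdA (q i₁) (Nat.gcd (q i₂) (q i₃)) * k := ⟨_, rfl⟩
    obtain ⟨c₂, hc₂⟩ : ∃ c : ℤ, c = Nat.gcdA (q i₂) (q i₃) * Nat.gcdB (q i₁) (Nat.gcd (q i₂) (q i₃)) * k := ⟨_, rfl⟩
    obtain ⟨c₃, hc₃⟩ : ∃ c : ℤ, c = Nat.gcdB (q i₂) (q i₃) * Nat.gcdB (q i₁) (Nat.gcd (q i₂) (q i₃)) * k := ⟨_, rfl⟩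
    have hcoexp : co t = c₁ * (q i₁) + c₂ * (q i₂) + c₃ * (q i₃) := by
      rw [hk, hbez2, hbez1, hc₁, hc₂, hc₃]; ring
    rw [hcoexp, add_smul, add_smul, mul_smul, mul_smul, mul_smul, hq1, hq2, hq3]
    simp
  rw [hXsum]
  exact Finset.sum_eq_zero fun t _ => hterm t
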